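/- Let R be a Noetherian F-finite commutative ring of characteristic p, let (M,C) be a q-Cartier module over R with M finitely generated, let f ∈ R, and let N ⊆ M be a finitely generated R-submodule such that the pair (N,f) satisfies the boundedness assumption. (1) If N is C-preperiodic (there exist i, j > 0 with C^i(N) = C^{i+j}(N)), then every α ∈ ν_f(q^∞;N) is rational, i.e., α is the image in ℤ_p ⊆ ℚ_p of a rational number under the canonical embedding ℚ → ℚ_p. (2) If moreover N = C^j(N) for some integer j > 0, then every α ∈ ν_f(q^∞;N) is the image of a rational number r with −1 ≤ r ≤ 0. -/

import Mathlib

set_option linter.unusedSectionVars false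
set_option linter.unusedTactic false
set_option maxHeartbeats 1000000

open Pointwise Function

/-- The set of ν-invariants of level `m` of a subset `N` of a `q`-Cartier module `(M, C)`
with respect to `f`: those `n : ℕ` with `C^m(f^n N) ≠ C^m(f^{n+1} N)`. -/
def nuLevel {R M : Type*} [CommRing R] [AddCommGroup M] [Module R M]
    (C : M → M) (f : R) (N : Set M) (m : ℕ) : Set ℕ :=
  {n | C^[m] '' (f ^ n • N) ≠ C^[m] '' (f ^ (n + 1) • N)}

/-- The set of ν-invariants of infinite level. -/
def nuInfinite {R M : Type*} [CommRing R] [AddCommGroup M] [Module R M]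
    (p : ℕ) [Fact p.Prime] (q : ℕ) (C : M → M) (f : R) (N : Set M) : Set ℤ_[p] :=
  {α | ∀ m : ℕ, 1 ≤ m → ∃ n ∈ nuLevel C f N m, ((q : ℤ_[p]) ^ m) ∣ (α - (n : ℤ_[p]))}

section SetLayer
variable {R M : Type*} [CommRing R] [AddCommGroup M] [Module R M]
variable {q : ℕ} {C : M → M} {f : R}

lemma chain_eq (g : ℕ → Set M) (n s : ℕ) (h : ∀ k, k < s → g (n+k) = g (n+k+1)) :
    g n = g (n+s) := by
  induction s with
  | zero => rfl
  | succ s ih =>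
      have := ih (fun k hk => h k (Nat.lt_succ_of_lt hk))
      rw [this, ← Nat.add_assoc]
      exact h s (Nat.lt_succ_self s)

lemma chain_sub (g : ℕ → Set M) (h : ∀ k, g (k+1) ⊆ g k) {a b : ℕ} (hab : a ≤ b) :
    g b ⊆ g a := by
  induction b with
  | zero => cases Nat.le_zero.mp hab; exact fun _ hx => hx
  | succ b ih =>
      rcases Nat.lt_or_ge a (b+1) with h1 | h1
      · exact (h b).trans (ih (Nat.lt_succ_iff.mp h1))
      · cases le_antisymm hab h1; exact fun _ hx => hx

lemma chain_mid (g : ℕ → Set M) (h : ∀ k, g (k+1) ⊆ g k) {a b k : ℕ}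
    (hak : a ≤ k) (hkb : k + 1 ≤ b) (hend : g a = g b) : g k = g (k+1) := by
  have h1 : g b ⊆ g (k+1) := chain_sub g h hkb
  have h2 : g (k+1) ⊆ g k := h k
  have h3 : g k ⊆ g a := chain_sub g h hak
  refine le_antisymm ?_ h2
  calc g k ⊆ g a := h3
    _ = g b := hend
    _ ⊆ g (k+1) := h1

variable (hCsl : ∀ (a : R) (x : M), C (a ^ q • x) = a • C x)
include hCsl

/-- pointwise semilinearity of iterates -/
lemma iter_sl (a : R) (m : ℕ) (x : M) : C^[m] (a ^ q ^ m • x) = a • C^[m] x := by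
  induction m generalizing x with
  | zero => simp
  | succ m ih =>
      have h1 : a ^ q ^ (m+1) = (a ^ q ^ m) ^ q := by
        rw [← pow_mul, pow_succ]
      rw [Function.iterate_succ_apply, Function.iterate_succ_apply, h1, hCsl]
      exact ih (C x)

/-- set version -/
lemma iter_sl_set (a : R) (m : ℕ) (T : Set M) :
    C^[m] '' ((a ^ q ^ m) • T) = a • (C^[m] '' T) := by
  rw [← Set.image_smul, Set.image_image, ← Set.image_smul, Set.image_image]
  exact Set.image_congr (fun x _ => iter_sl hCsl a m x)

/-- key relation: `C^m(f^n • C^i(S)) = C^{m+i}(f^{n q^i} • S)` -/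
lemma key_rel (m i n : ℕ) (S : Set M) :
    C^[m] '' ((f ^ n) • (C^[i] '' S)) = C^[m+i] '' ((f ^ (n * q ^ i)) • S) := by
  rw [Function.iterate_add, Set.image_comp]
  rw [pow_mul, iter_sl_set hCsl]

end SetLayer

section NuLayer
variable {R M : Type*} [CommRing R] [AddCommGroup M] [Module R M]
variable {q : ℕ} {C : M → M} {f : R}
variable (hCsl : ∀ (a : R) (x : M), C (a ^ q • x) = a • C x)

/-- the images form a descending chain when `f • S ⊆ S` -/
lemma im_anti {S : Set M} (hS : f • S ⊆ S) (m : ℕ) (k : ℕ) :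
    C^[m] '' (f ^ (k+1) • S) ⊆ C^[m] '' (f ^ k • S) := by
  apply Set.image_mono
  have : f ^ (k+1) • S = f ^ k • (f • S) := by rw [smul_smul, ← pow_succ]
  rw [this]
  exact Set.smul_set_mono hS

include hCsl

/-- level monotonicity: `nuLevel (m') ⊆ nuLevel m` for `m ≤ m'` -/
lemma nuLevel_mono {S : Set M} {m m' : ℕ} (h : m ≤ m') :
    nuLevel C f S m' ⊆ nuLevel C f S m := by
  clear hCsl
  intro n hn
  induction m' with
  | zero => cases Nat.le_zero.mp h; exact hn
  | succ m' ih =>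
      rcases Nat.lt_or_ge m (m'+1) with h1 | h1
      · apply ih (Nat.lt_succ_iff.mp h1)
        intro heq
        apply hn
        show C^[m'+1] '' _ = C^[m'+1] '' _
        rw [Function.iterate_succ', Set.image_comp, Set.image_comp, heq]
      · cases le_antisymm h h1; exact hn

/-- shift down by `q^m`: membership descends -/
lemma nuLevel_shift_qm {S : Set M} {m n : ℕ} (h : n + q^m ∈ nuLevel C f S m) :
    n ∈ nuLevel C f S m := by
  intro heq
  apply h
  show C^[m] '' (f ^ (n + q^m) • S) = C^[m] '' (f ^ (n + q^m + 1) • S)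
  have key : ∀ k : ℕ, C^[m] '' (f ^ (k + q^m) • S) = f • (C^[m] '' (f ^ k • S)) := by
    intro k
    have : f ^ (k + q^m) • S = (f ^ (q^m)) • (f ^ k • S) := by
      rw [smul_smul, ← pow_add, Nat.add_comm]
    rw [this, iter_sl_set hCsl]
  rw [key n, Nat.add_right_comm, key (n+1), heq]

lemma nuLevel_shift_qm_iter {S : Set M} {m : ℕ} (k : ℕ) {n : ℕ}
    (h : n + k * q^m ∈ nuLevel C f S m) : n ∈ nuLevel C f S m := by
  induction k generalizing n with
  | zero => simpa using h
  | succ k ih =>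
      apply ih
      apply nuLevel_shift_qm hCsl
      have : n + k * q^m + q^m = n + (k+1) * q^m := by ring
      rw [this]
      exact h

lemma nuLevel_mod {S : Set M} {m n : ℕ} (h : n ∈ nuLevel C f S m) :
    n % q^m ∈ nuLevel C f S m := by
  apply nuLevel_shift_qm_iter hCsl (n / q^m)
  rwa [Nat.mod_add_div' n (q^m)]

/-- shift up: from level `m` for `C^[i]''S` to level `m+i` for `S` -/
lemma nuLevel_shift_up {S : Set M} {m i n : ℕ}
    (hn : n ∈ nuLevel C f (C^[i] '' S) m) :
    ∃ u, u < q^i ∧ n * q^i + u ∈ nuLevel C f S (m+i) := by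
  by_contra hcon
  push_neg at hcon
  apply hn
  show C^[m] '' (f ^ n • (C^[i] '' S)) = C^[m] '' (f ^ (n+1) • (C^[i] '' S))
  rw [key_rel hCsl, key_rel hCsl]
  have hchain := chain_eq (fun k => C^[m+i] '' (f ^ k • S)) (n * q^i) (q^i)
    (fun k hk => by
      exact not_not.mp (hcon k hk))
  have : (n+1) * q^i = n * q^i + q^i := by ring
  rw [this]
  exact hchain

/-- shift down: from level `m+i` for `S` to level `m` for `C^[i]''S` -/
lemma nuLevel_shift_down {S : Set M} (hS : f • S ⊆ S) {m i n u : ℕ} (hu : u < q^i)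
    (hq1 : 0 < q)
    (hn : n * q^i + u ∈ nuLevel C f S (m+i)) :
    n ∈ nuLevel C f (C^[i] '' S) m := by
  intro heq
  have heq' : C^[m+i] '' (f ^ (n * q^i) • S) = C^[m+i] '' (f ^ ((n+1) * q^i) • S) := by
    rw [← key_rel hCsl, ← key_rel hCsl]
    exact heq
  apply hn
  exact chain_mid (fun k => C^[m+i] '' (f ^ k • S)) (fun k => im_anti hS (m+i) k)
    (by omega)
    (by
      have h1 : (n+1) * q^i = n * q^i + q^i := by ring
      omega) heq'

/-- in the periodic case: every level-`m` invariant lifts to level `m+j` -/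
lemma nuLevel_lift {S : Set M} {j : ℕ} (hper : C^[j] '' S = S) {m n : ℕ}
    (hn : n ∈ nuLevel C f S m) :
    ∃ u, u < q^j ∧ n * q^j + u ∈ nuLevel C f S (m+j) := by
  apply nuLevel_shift_up hCsl
  rwa [hper]

end NuLayer

section Padic
variable {p : ℕ} [hp : Fact p.Prime] {e q : ℕ} (he : 1 ≤ e) (hq : q = p ^ e)

include he hq

lemma q_two : 2 ≤ q := by
  subst hq
  calc 2 ≤ p := hp.out.two_le
    _ = p ^ 1 := (pow_one p).symm
    _ ≤ p ^ e := Nat.pow_le_pow_right hp.out.one_lt.le he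

lemma qpow_dvd_norm' {m : ℕ} {x : ℤ_[p]} (h : ((q:ℤ_[p]))^m ∣ x) :
    ‖x‖ ≤ ((p:ℝ))⁻¹ ^ (e*m) := by
  obtain ⟨y, hy⟩ := h
  have hcast : ((q:ℤ_[p]))^m = ((p:ℤ_[p]))^(e*m) := by
    subst hq
    push_cast
    rw [← pow_mul]
  rw [hy, norm_mul, hcast, norm_pow, PadicInt.norm_p]
  have h1 : ‖y‖ ≤ 1 := PadicInt.norm_le_one y
  calc ((p:ℝ))⁻¹ ^ (e*m) * ‖y‖ ≤ ((p:ℝ))⁻¹ ^ (e*m) * 1 := by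
        apply mul_le_mul_of_nonneg_left h1 (by positivity)
    _ = ((p:ℝ))⁻¹ ^ (e*m) := mul_one _

lemma qpow_dvd_norm {m : ℕ} {x : ℤ_[p]} (h : ((q:ℤ_[p]))^m ∣ x) :
    ‖x‖ ≤ ((p:ℝ))⁻¹ ^ m := by
  refine (qpow_dvd_norm' he hq h).trans ?_
  have hple : ((p:ℝ))⁻¹ ≤ 1 := by
    rw [inv_le_one_iff₀]
    right
    exact_mod_cast hp.out.one_le
  exact pow_le_pow_of_le_one (by positivity) hple (Nat.le_mul_of_pos_left m (by omega))

/-- separation: a nonzero p-adic integer is not divisible by all `q^m` -/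
lemma q_sep {x : ℤ_[p]} (hx : x ≠ 0) : ∃ m : ℕ, ¬ ((q:ℤ_[p]))^m ∣ x := by
  have hnorm : 0 < ‖x‖ := norm_pos_iff.mpr hx
  have hlt : ((p:ℝ))⁻¹ < 1 := by
    rw [inv_lt_one_iff₀]
    right
    exact_mod_cast hp.out.one_lt
  obtain ⟨m, hm⟩ := exists_pow_lt_of_lt_one hnorm hlt
  exact ⟨m, fun hdvd => absurd (qpow_dvd_norm he hq hdvd) (not_le.mpr hm)⟩

/-- a natural number `< q^m` divisible by `q^m` in `ℤ_p` is zero -/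
lemma nat_dvd_zero {m k : ℕ} (hk : k < q^m) (h : ((q:ℤ_[p]))^m ∣ (k:ℤ_[p])) : k = 0 := by
  by_contra hk0
  have h1 : ‖((k:ℤ):ℤ_[p])‖ ≤ (p:ℝ) ^ (-((e*m:ℕ)):ℤ) := by
    have h2 := qpow_dvd_norm' he hq h
    rw [inv_pow, ← zpow_natCast, ← zpow_neg] at h2
    exact_mod_cast h2
  have h2 : ((p:ℤ))^(e*m) ∣ (k:ℤ) := PadicInt.norm_int_le_pow_iff_dvd.mp h1
  have h3 : ((q:ℤ))^m = ((p:ℤ))^(e*m) := by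
    subst hq; push_cast; rw [← pow_mul]
  have h4 : ((p:ℤ))^(e*m) ≤ (k:ℤ) := Int.le_of_dvd (by exact_mod_cast Nat.pos_of_ne_zero hk0) h2
  rw [← h3] at h4
  have : (q:ℤ)^m = ((q^m : ℕ) : ℤ) := by push_cast; ring
  omega

/-- uniqueness of residues -/
lemma residue_unique {m n₁ n₂ : ℕ} (h1 : n₁ < q^m) (h2 : n₂ < q^m)
    (hd : ((q:ℤ_[p]))^m ∣ ((n₁:ℤ_[p]) - (n₂:ℤ_[p]))) : n₁ = n₂ := by
  rcases Nat.le_total n₂ n₁ with hle | hle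
  · have : ((n₁:ℤ_[p]) - (n₂:ℤ_[p])) = ((n₁ - n₂ : ℕ) : ℤ_[p]) := by
      push_cast [Nat.cast_sub hle]; ring
    rw [this] at hd
    have := nat_dvd_zero he hq (show n₁ - n₂ < q^m by omega) hd
    omega
  · have : ((n₁:ℤ_[p]) - (n₂:ℤ_[p])) = -((n₂ - n₁ : ℕ) : ℤ_[p]) := by
      push_cast [Nat.cast_sub hle]; ring
    rw [this, dvd_neg] at hd
    have := nat_dvd_zero he hq (show n₂ - n₁ < q^m by omega) hd
    omega

end Padic

section Main
variable {R M : Type*} [CommRing R] [AddCommGroup M] [Module R M]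
variable {p : ℕ} [hp : Fact p.Prime] {e q : ℕ} (he : 1 ≤ e) (hq : q = p ^ e)
variable {C : M → M} {f : R}
variable (hCsl : ∀ (a : R) (x : M), C (a ^ q • x) = a • C x)

include he hq hCsl

/-- canonical residues: for `α` of infinite level, each level `m ≥ 1` has a residue `< q^m` -/
lemma exists_residue {S : Set M} {α : ℤ_[p]} (hα : α ∈ nuInfinite p q C f S)
    {m : ℕ} (hm : 1 ≤ m) :
    ∃ n, n < q^m ∧ n ∈ nuLevel C f S m ∧ ((q:ℤ_[p]))^m ∣ (α - (n:ℤ_[p])) := by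
  obtain ⟨n₀, hmem, hdvd⟩ := hα m hm
  have hq2 : 2 ≤ q := q_two he hq
  have hqm : 0 < q^m := Nat.pow_pos (by omega)
  refine ⟨n₀ % q^m, Nat.mod_lt n₀ hqm, nuLevel_mod hCsl hmem, ?_⟩
  have hsplit : α - ((n₀ % q^m : ℕ):ℤ_[p])
      = (α - (n₀:ℤ_[p])) + ((q:ℤ_[p]))^m * ((n₀ / q^m : ℕ):ℤ_[p]) := by
    have : (n₀ : ℤ_[p]) = ((n₀ % q^m : ℕ):ℤ_[p]) + ((q:ℤ_[p]))^m * ((n₀ / q^m : ℕ):ℤ_[p]) := by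
      have hn : n₀ % q^m + q^m * (n₀ / q^m) = n₀ := Nat.mod_add_div n₀ (q^m)
      calc (n₀ : ℤ_[p]) = ((n₀ % q^m + q^m * (n₀ / q^m) : ℕ) : ℤ_[p]) := by rw [hn]
        _ = _ := by push_cast; ring
    rw [this]; ring
  rw [hsplit]
  exact dvd_add hdvd (Dvd.intro _ rfl)

/-- the τ-step: in the periodic case, `q^j·α + i` is again of infinite level for some `i < q^j`. -/
lemma tau_step {S : Set M} {j : ℕ} (hj : 1 ≤ j) (hper : C^[j] '' S = S)
    {α : ℤ_[p]} (hα : α ∈ nuInfinite p q C f S) :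
    ∃ i, i < q^j ∧ ((q:ℤ_[p]))^j * α + (i:ℤ_[p]) ∈ nuInfinite p q C f S := by
  -- for each level, pick residue and lift
  have hstep : ∀ m : ℕ, 1 ≤ m → ∃ i, i < q^j ∧ ∃ n, n < q^m ∧
      (n * q^j + i ∈ nuLevel C f S (m+j)) ∧ ((q:ℤ_[p]))^m ∣ (α - (n:ℤ_[p])) := by
    intro m hm
    obtain ⟨n, hlt, hmem, hdvd⟩ := exists_residue he hq hCsl hα hm
    obtain ⟨u, hu, hmem'⟩ := nuLevel_lift hCsl hper hmem
    exact ⟨u, hu, n, hlt, hmem', hdvd⟩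
  classical
  -- the chosen digit at each level
  let I : ℕ → ℕ := fun m => if h : 1 ≤ m then (hstep m h).choose else 0
  have hI : ∀ m (h : 1 ≤ m), I m < q^j ∧ ∃ n, n < q^m ∧
      (n * q^j + I m ∈ nuLevel C f S (m+j)) ∧ ((q:ℤ_[p]))^m ∣ (α - (n:ℤ_[p])) := by
    intro m h
    simp only [I, dif_pos h]
    exact ⟨(hstep m h).choose_spec.1, (hstep m h).choose_spec.2⟩
  -- pigeonhole: some digit occurs for arbitrarily large levels
  have hpigeon : ∃ i, i < q^j ∧ ∀ m₀ : ℕ, ∃ m, m₀ ≤ m ∧ 1 ≤ m ∧ I m = i := by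
    by_contra hcon
    push_neg at hcon
    -- for each i < q^j there is a bound beyond which I m ≠ i
    have hG : ∀ i, ∃ m₀, i < q^j → ∀ m, m₀ ≤ m → 1 ≤ m → I m ≠ i := by
      intro i
      by_cases hi : i < q^j
      · obtain ⟨m₀, hm₀⟩ := hcon i hi
        refine ⟨m₀, fun _ m hm h1 hIm => ?_⟩
        have := hm₀ m hm
        tauto
      · exact ⟨0, fun h => absurd h hi⟩
    choose G hG2 using hG
    set mstar := 1 + (Finset.range (q^j)).sup G with hmstar
    have h1 : 1 ≤ mstar := by omega
    have hIm := (hI mstar h1).1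
    have hle : G (I mstar) ≤ mstar := by
      have : G (I mstar) ≤ (Finset.range (q^j)).sup G :=
        Finset.le_sup (Finset.mem_range.mpr hIm)
      omega
    exact hG2 (I mstar) hIm mstar hle h1 rfl
  obtain ⟨i, hi, hinf⟩ := hpigeon
  refine ⟨i, hi, ?_⟩
  intro m' hm'
  obtain ⟨m, hmm', h1m, hIm⟩ := hinf m'
  obtain ⟨_, n, hn_lt, hn_mem, hn_dvd⟩ := hI m h1m
  rw [hIm] at hn_mem
  refine ⟨n * q^j + i, nuLevel_mono hCsl (by omega) hn_mem, ?_⟩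
  have hcast : ((n * q^j + i : ℕ) : ℤ_[p]) = (n:ℤ_[p]) * ((q:ℤ_[p]))^j + (i:ℤ_[p]) := by
    push_cast; ring
  rw [hcast]
  obtain ⟨y, hy⟩ := hn_dvd
  have : ((q:ℤ_[p]))^j * α + (i:ℤ_[p]) - ((n:ℤ_[p]) * ((q:ℤ_[p]))^j + (i:ℤ_[p]))
      = ((q:ℤ_[p]))^(m+j) * y := by
    rw [pow_add]
    calc ((q:ℤ_[p]))^j * α + (i:ℤ_[p]) - ((n:ℤ_[p]) * ((q:ℤ_[p]))^j + (i:ℤ_[p]))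
        = ((q:ℤ_[p]))^j * (α - (n:ℤ_[p])) := by ring
      _ = ((q:ℤ_[p]))^j * (((q:ℤ_[p]))^m * y) := by rw [hy]
      _ = ((q:ℤ_[p]))^m * ((q:ℤ_[p]))^j * y := by ring
  rw [this]
  exact Dvd.dvd.mul_right (pow_dvd_pow _ (by omega)) y

/-- pigeonhole: any sequence of infinite-level invariants has a repetition,
given the boundedness assumption. -/
lemma seq_repeat {S : Set M} {L : ℕ}
    (hL : ∀ m : ℕ, 1 ≤ m → {n : ℕ | n < q ^ m ∧ n ∈ nuLevel C f S m}.ncard ≤ L)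
    (g : ℕ → ℤ_[p]) (hg : ∀ k, g k ∈ nuInfinite p q C f S) :
    ∃ a b, a < b ∧ g a = g b := by
  classical
  by_contra hcon
  push_neg at hcon
  have hne : ∀ a b, a ≠ b → g a ≠ g b := by
    intro a b hab
    rcases Nat.lt_or_ge a b with h | h
    · exact hcon a b h
    · exact fun hgg => (hcon b a (by omega)) hgg.symm
  -- separation levels for each pair
  have hF : ∀ ab : ℕ × ℕ, ∃ m₀, ab.1 ≠ ab.2 → ¬ ((q:ℤ_[p]))^m₀ ∣ (g ab.1 - g ab.2) := by
    intro ⟨a, b⟩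
    by_cases hab : a ≠ b
    · obtain ⟨m₀, hm₀⟩ := q_sep he hq (sub_ne_zero.mpr (hne a b hab))
      exact ⟨m₀, fun _ => hm₀⟩
    · exact ⟨0, fun h => absurd h hab⟩
  choose F hF2 using hF
  set m := 1 + ((Finset.range (L+1)) ×ˢ (Finset.range (L+1))).sup F with hm
  have h1m : 1 ≤ m := by omega
  -- residues at level m
  have hres : ∀ k, ∃ n, n < q^m ∧ n ∈ nuLevel C f S m ∧ ((q:ℤ_[p]))^m ∣ (g k - (n:ℤ_[p])) :=
    fun k => exists_residue he hq hCsl (hg k) h1m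
  choose r hr1 hr2 hr3 using hres
  -- r is injective on range (L+1)
  have hinj : Set.InjOn r ↑(Finset.range (L+1)) := by
    intro a ha b hb hab
    by_contra hne'
    have habm : F (a, b) ≤ ((Finset.range (L+1)) ×ˢ (Finset.range (L+1))).sup F :=
      Finset.le_sup (Finset.mem_product.mpr ⟨ha, hb⟩)
    have hdvd : ((q:ℤ_[p]))^m ∣ (g a - g b) := by
      have : g a - g b = (g a - (r a : ℤ_[p])) - (g b - (r b : ℤ_[p])) := by
        rw [hab]; ring
      rw [this]
      exact dvd_sub (hr3 a) (hr3 b)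
    have hdvd' : ((q:ℤ_[p]))^(F (a,b)) ∣ (g a - g b) :=
      dvd_trans (pow_dvd_pow _ (by omega)) hdvd
    exact hF2 (a, b) hne' hdvd'
  -- cardinality contradiction
  have hmaps : Set.MapsTo r ↑(Finset.range (L+1)) {n : ℕ | n < q ^ m ∧ n ∈ nuLevel C f S m} :=
    fun k _ => ⟨hr1 k, hr2 k⟩
  have hfin : {n : ℕ | n < q ^ m ∧ n ∈ nuLevel C f S m}.Finite :=
    (Set.finite_Iio (q^m)).subset (fun n hn => hn.1)
  have hcard := Set.ncard_le_ncard_of_injOn r hmaps hinj hfin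
  rw [Set.ncard_coe_finset, Finset.card_range] at hcard
  have := hL m h1m
  omega

end Main

section Main2
variable {R M : Type*} [CommRing R] [AddCommGroup M] [Module R M]
variable {p : ℕ} [hp : Fact p.Prime] {e q : ℕ} (he : 1 ≤ e) (hq : q = p ^ e)
variable {C : M → M} {f : R}
variable (hCsl : ∀ (a : R) (x : M), C (a ^ q • x) = a • C x)

include he hq hCsl

/-- the main rationality lemma in the periodic case -/
lemma main_periodic {S : Set M} {j : ℕ} (hj : 1 ≤ j)
    (hper : C^[j] '' S = S) {L : ℕ}
    (hL : ∀ m : ℕ, 1 ≤ m → {n : ℕ | n < q ^ m ∧ n ∈ nuLevel C f S m}.ncard ≤ L)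
    {α : ℤ_[p]} (hα : α ∈ nuInfinite p q C f S) :
    ∃ r : ℚ, -1 ≤ r ∧ r ≤ 0 ∧ ((α : ℚ_[p]) = (r : ℚ_[p])) := by
  classical
  have hq2 : 2 ≤ q := q_two he hq
  -- iterate the τ-step
  have hstep : ∀ b : {x : ℤ_[p] // x ∈ nuInfinite p q C f S},
      ∃ c : {x : ℤ_[p] // x ∈ nuInfinite p q C f S},
      ∃ i : ℕ, i < q^j ∧ (c:ℤ_[p]) = ((q:ℤ_[p]))^j * (b:ℤ_[p]) + (i:ℤ_[p]) := by
    intro b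
    obtain ⟨i, hi, hmem⟩ := tau_step he hq hCsl hj hper b.2
    exact ⟨⟨_, hmem⟩, i, hi, rfl⟩
  choose g hg using hstep
  set seq : ℕ → {x : ℤ_[p] // x ∈ nuInfinite p q C f S} := fun k => g^[k] ⟨α, hα⟩ with hseqdef
  have hseq0 : ((seq 0 : ℤ_[p])) = α := rfl
  have hseqS : ∀ k, ∃ i, i < q^j ∧
      ((seq (k+1) : ℤ_[p])) = ((q:ℤ_[p]))^j * ((seq k : ℤ_[p])) + (i:ℤ_[p]) := by
    intro k
    have h1 : seq (k+1) = g (seq k) := by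
      show g^[k+1] _ = _
      rw [Function.iterate_succ_apply']
    rw [h1]
    exact hg (seq k)
  -- growth of the sequence
  have grow : ∀ s k, ∃ d : ℕ, d < q^(j*s) ∧
      ((seq (k+s) : ℤ_[p])) = ((q:ℤ_[p]))^(j*s) * ((seq k : ℤ_[p])) + (d:ℤ_[p]) := by
    intro s
    induction s with
    | zero =>
        intro k
        refine ⟨0, by simp, ?_⟩
        simp
    | succ s ih =>
        intro k
        obtain ⟨d, hd, hds⟩ := ih k
        obtain ⟨i, hi, his⟩ := hseqS (k+s)
        refine ⟨q^j * d + i, ?_, ?_⟩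
        · have hqq : q^(j*(s+1)) = q^j * q^(j*s) := by
            rw [← pow_add]
            ring_nf
          calc q^j*d + i < q^j*d + q^j := by omega
            _ = q^j*(d+1) := by ring
            _ ≤ q^j * q^(j*s) := Nat.mul_le_mul_left _ (by omega)
            _ = q^(j*(s+1)) := hqq.symm
        · have hplus : k + (s+1) = (k+s)+1 := rfl
          rw [hplus, his, hds, show j*(s+1) = j*s + j by ring, pow_add]
          push_cast
          ring
  -- repetition
  obtain ⟨a, b, hab, heqab⟩ := seq_repeat he hq hCsl hL
    (fun k => ((seq k : ℤ_[p]))) (fun k => (seq k).2)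
  set t := b - a with ht
  have ht1 : 1 ≤ t := by omega
  obtain ⟨en, hen_lt, hen_eq⟩ := grow t a
  have hat : a + t = b := by omega
  rw [hat] at hen_eq
  rw [show ((seq b : ℤ_[p])) = ((seq a : ℤ_[p])) from heqab.symm] at hen_eq
  obtain ⟨d, hd_lt, hd_eq⟩ := grow a 0
  rw [Nat.zero_add, hseq0] at hd_eq
  -- pass to ℚ_p
  set A : ℚ_[p] := (α : ℚ_[p]) with hA
  set B : ℚ_[p] := ((seq a : ℤ_[p]) : ℚ_[p]) with hB
  have hd_eq' : B = ((q:ℚ_[p]))^(j*a) * A + (d:ℚ_[p]) := by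
    rw [hB, hA, hd_eq]
    push_cast
    ring
  have hen_eq' : B = ((q:ℚ_[p]))^(j*t) * B + (en:ℚ_[p]) := by
    rw [hB]
    nth_rewrite 1 [hen_eq]
    push_cast
    ring
  have hq0 : (q:ℚ_[p]) ≠ 0 := Nat.cast_ne_zero.mpr (by omega)
  have hQa' : ((q:ℚ_[p]))^(j*a) ≠ 0 := pow_ne_zero _ hq0
  have hQt1 : ((q:ℚ_[p]))^(j*t) ≠ 1 := by
    intro hcon
    have h2 : ((q^(j*t) : ℕ) : ℚ_[p]) = ((1:ℕ) : ℚ_[p]) := by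
      push_cast
      rw [hcon]
    have h3 : q^(j*t) = 1 := Nat.cast_injective h2
    have h4 : 2 ≤ q^(j*t) := by
      calc 2 ≤ q := hq2
        _ = q^1 := (pow_one q).symm
        _ ≤ q^(j*t) := Nat.pow_le_pow_right (by omega) (by nlinarith)
    omega
  have hQt0 : (1:ℚ_[p]) - ((q:ℚ_[p]))^(j*t) ≠ 0 := by
    intro hcon
    exact hQt1 (by linear_combination -hcon)
  -- the rational value
  refine ⟨((en:ℚ)/(1 - (q:ℚ)^(j*t)) - (d:ℚ))/((q:ℚ))^(j*a), ?_, ?_, ?_⟩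
  · -- -1 ≤ r
    have hQt2 : (2:ℚ) ≤ (q:ℚ)^(j*t) := by
      calc (2:ℚ) ≤ (q:ℚ) := by exact_mod_cast hq2
        _ = (q:ℚ)^1 := (pow_one _).symm
        _ ≤ (q:ℚ)^(j*t) := by
          apply pow_le_pow_right₀ (by exact_mod_cast (by omega : 1 ≤ q)) (by nlinarith)
    have hQa2 : (1:ℚ) ≤ (q:ℚ)^(j*a) := one_le_pow₀ (by exact_mod_cast (by omega : 1 ≤ q))
    have hen2 : (en:ℚ) ≤ (q:ℚ)^(j*t) - 1 := by
      have : (en:ℚ) + 1 ≤ ((q^(j*t):ℕ):ℚ) := by exact_mod_cast hen_lt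
      push_cast at this
      linarith
    have hd2 : (d:ℚ) + 1 ≤ (q:ℚ)^(j*a) := by
      have : (d:ℚ) + 1 ≤ ((q^(j*a):ℕ):ℚ) := by exact_mod_cast hd_lt
      push_cast at this
      linarith
    have hden : (1:ℚ) - (q:ℚ)^(j*t) < 0 := by linarith
    have hx : (en:ℚ)/(1 - (q:ℚ)^(j*t)) * (1 - (q:ℚ)^(j*t)) = en :=
      div_mul_cancel₀ _ (by linarith)
    have hxge : -1 ≤ (en:ℚ)/(1 - (q:ℚ)^(j*t)) := by nlinarith
    rw [le_div_iff₀ (by linarith : (0:ℚ) < (q:ℚ)^(j*a))]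
    nlinarith
  · -- r ≤ 0
    have hden : (1:ℚ) - (q:ℚ)^(j*t) < 0 := by
      have hQt2 : (2:ℚ) ≤ (q:ℚ)^(j*t) := by
        calc (2:ℚ) ≤ (q:ℚ) := by exact_mod_cast hq2
          _ = (q:ℚ)^1 := (pow_one _).symm
          _ ≤ (q:ℚ)^(j*t) := by
            apply pow_le_pow_right₀ (by exact_mod_cast (by omega : 1 ≤ q)) (by nlinarith)
      linarith
    have hx : (en:ℚ)/(1 - (q:ℚ)^(j*t)) * (1 - (q:ℚ)^(j*t)) = en :=
      div_mul_cancel₀ _ (by linarith)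
    have hxle : (en:ℚ)/(1 - (q:ℚ)^(j*t)) ≤ 0 := by nlinarith [Nat.cast_nonneg (α := ℚ) en]
    apply div_nonpos_of_nonpos_of_nonneg
    · have : (0:ℚ) ≤ (d:ℚ) := Nat.cast_nonneg d
      linarith
    · positivity
  · -- the equality in ℚ_p
    push_cast
    rw [eq_div_iff hQa', div_sub' hQt0, eq_div_iff hQt0]
    linear_combination (((q:ℚ_[p]))^(j*t) - 1) * hd_eq' + hen_eq'

end Main2

theorem stmt6 {R M : Type*} [CommRing R] [AddCommGroup M] [Module R M]
    (p : ℕ) [Fact p.Prime] [CharP R p] [IsNoetherianRing R]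
    (hFF : (frobenius R p).Finite)
    (e q : ℕ) (he : 1 ≤ e) (hq : q = p ^ e)
    (C : M → M) (hCadd : ∀ x y : M, C (x + y) = C x + C y)
    (hCsl : ∀ (a : R) (x : M), C (a ^ q • x) = a • C x)
    [Module.Finite R M] (f : R) (N : Submodule R M) (hNfg : N.FG)
    (hbound : ∃ L : ℕ, ∀ m : ℕ, 1 ≤ m →
      {n : ℕ | n < q ^ m ∧ n ∈ nuLevel C f (N : Set M) m}.ncard ≤ L) :
    -- (1) if `N` is `C`-preperiodic, then every ν-invariant of infinite level is rational
    ((∃ i j : ℕ, 0 < i ∧ 0 < j ∧ C^[i] '' (N : Set M) = C^[i + j] '' (N : Set M)) →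
      ∀ α ∈ nuInfinite p q C f (N : Set M), ∃ r : ℚ, (α : ℚ_[p]) = (r : ℚ_[p])) ∧
    -- (2) if moreover `N = C^j(N)` for some `j > 0`, the rational lies in `[-1, 0]`
    (∀ j : ℕ, 0 < j → C^[j] '' (N : Set M) = (N : Set M) →
      ∀ α ∈ nuInfinite p q C f (N : Set M),
        ∃ r : ℚ, -1 ≤ r ∧ r ≤ 0 ∧ (α : ℚ_[p]) = (r : ℚ_[p])) := by
  classical
  obtain ⟨L, hL⟩ := hbound
  have hq2 : 2 ≤ q := q_two he hq
  have hSN : f • (N : Set M) ⊆ (N : Set M) := by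
    intro x hx
    rw [Set.mem_smul_set] at hx
    obtain ⟨y, hy, rfl⟩ := hx
    exact N.smul_mem f hy
  constructor
  · -- part (1)
    rintro ⟨i, j, hi, hj, hpp⟩ α hα
    set S' : Set M := C^[i] '' (N : Set M) with hS'def
    have hper' : C^[j] '' S' = S' := by
      show C^[j] '' (C^[i] '' (N : Set M)) = C^[i] '' (N : Set M)
      rw [← Set.image_comp, ← Function.iterate_add, Nat.add_comm]
      exact hpp.symm
    -- transfer the boundedness assumption
    have hqi_pos : 0 < q^i := Nat.pow_pos (by omega)
    have hL' : ∀ m : ℕ, 1 ≤ m → {n : ℕ | n < q ^ m ∧ n ∈ nuLevel C f S' m}.ncard ≤ L := by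
      intro m hm
      set φ : ℕ → ℕ := fun n =>
        if h : n ∈ nuLevel C f S' m then n * q^i + (nuLevel_shift_up hCsl h).choose else 0
        with hφdef
      have hφspec : ∀ n (h : n ∈ nuLevel C f S' m),
          (nuLevel_shift_up hCsl h).choose < q^i ∧
          n * q^i + (nuLevel_shift_up hCsl h).choose ∈ nuLevel C f (N : Set M) (m+i) :=
        fun n h => (nuLevel_shift_up hCsl h).choose_spec
      have hmaps : Set.MapsTo φ {n : ℕ | n < q ^ m ∧ n ∈ nuLevel C f S' m}
          {n : ℕ | n < q ^ (m+i) ∧ n ∈ nuLevel C f (N : Set M) (m+i)} := by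
        rintro n ⟨hn1, hn2⟩
        obtain ⟨hu1, hu2⟩ := hφspec n hn2
        refine ⟨?_, ?_⟩
        · show φ n < q^(m+i)
          rw [hφdef]
          simp only [dif_pos hn2]
          calc n * q^i + (nuLevel_shift_up hCsl hn2).choose < (n+1) * q^i := by
                have : (n+1) * q^i = n * q^i + q^i := by ring
                omega
            _ ≤ q^m * q^i := Nat.mul_le_mul_right _ (by omega)
            _ = q^(m+i) := (pow_add q m i).symm
        · show φ n ∈ nuLevel C f (N : Set M) (m+i)
          rw [hφdef]
          simp only [dif_pos hn2]
          exact hu2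
      have hinj : Set.InjOn φ {n : ℕ | n < q ^ m ∧ n ∈ nuLevel C f S' m} := by
        rintro n1 ⟨_, h1⟩ n2 ⟨_, h2⟩ heq
        rw [hφdef] at heq
        simp only [dif_pos h1, dif_pos h2] at heq
        obtain ⟨hu1, _⟩ := hφspec n1 h1
        obtain ⟨hu2, _⟩ := hφspec n2 h2
        have key : ∀ (n u : ℕ), u < q^i → (n * q^i + u) / q^i = n := by
          intro n u hu
          rw [Nat.mul_comm, Nat.mul_add_div hqi_pos, Nat.div_eq_of_lt hu, Nat.add_zero]
        calc n1 = (n1 * q^i + (nuLevel_shift_up hCsl h1).choose) / q^i :=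
              (key n1 _ hu1).symm
          _ = (n2 * q^i + (nuLevel_shift_up hCsl h2).choose) / q^i := by rw [heq]
          _ = n2 := key n2 _ hu2
      have hfin : {n : ℕ | n < q ^ (m+i) ∧ n ∈ nuLevel C f (N : Set M) (m+i)}.Finite :=
        (Set.finite_Iio (q^(m+i))).subset (fun n hn => hn.1)
      calc {n : ℕ | n < q ^ m ∧ n ∈ nuLevel C f S' m}.ncard
          ≤ {n : ℕ | n < q ^ (m+i) ∧ n ∈ nuLevel C f (N : Set M) (m+i)}.ncard :=
            Set.ncard_le_ncard_of_injOn φ hmaps hinj hfin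
        _ ≤ L := hL (m+i) (by omega)
    -- find the bottom digits and the shifted invariant
    obtain ⟨u, hu_lt, _, hu_dvd⟩ := exists_residue he hq hCsl hα hi
    obtain ⟨β, hβ_eq⟩ := hu_dvd
    have hqcast0 : ((q:ℤ_[p])) ≠ 0 := Nat.cast_ne_zero.mpr (by omega)
    have hβmem : β ∈ nuInfinite p q C f S' := by
      intro m hm
      obtain ⟨n, hn_lt, hn_mem, hn_dvd⟩ := exists_residue he hq hCsl hα
        (show 1 ≤ m + i by omega)
      set u' := n % q^i with hu'def
      set n₀ := n / q^i with hn₀def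
      have hn_split : q^i * n₀ + u' = n := Nat.div_add_mod n (q^i)
      have hu'_lt : u' < q^i := Nat.mod_lt _ hqi_pos
      have hcast_n : (n : ℤ_[p]) = ((q:ℤ_[p]))^i * (n₀ : ℤ_[p]) + (u' : ℤ_[p]) := by
        rw [← hn_split]; push_cast; ring
      have hdvd_αn : ((q:ℤ_[p]))^i ∣ (α - (n:ℤ_[p])) :=
        dvd_trans (pow_dvd_pow _ (by omega)) hn_dvd
      have huu' : u = u' := by
        apply residue_unique he hq hu_lt hu'_lt
        have : (u:ℤ_[p]) - (u':ℤ_[p])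
            = -(α - (u:ℤ_[p])) + (α - (n:ℤ_[p])) + (((q:ℤ_[p]))^i * (n₀:ℤ_[p])) := by
          rw [hcast_n]; ring
        rw [this]
        exact dvd_add (dvd_add (dvd_neg.mpr ⟨β, hβ_eq⟩) hdvd_αn) (Dvd.intro _ rfl)
      have hmem₀ : n₀ ∈ nuLevel C f S' m := by
        apply nuLevel_shift_down hCsl hSN hu'_lt (by omega)
        have : n₀ * q^i + u' = n := by rw [Nat.mul_comm]; exact hn_split
        rw [this]
        exact hn_mem
      obtain ⟨y, hy⟩ := hn_dvd
      refine ⟨n₀, hmem₀, y, ?_⟩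
      apply mul_left_cancel₀ (pow_ne_zero i hqcast0)
      have hqβ : ((q:ℤ_[p]))^i * β = α - (u:ℤ_[p]) := hβ_eq.symm
      calc ((q:ℤ_[p]))^i * (β - (n₀:ℤ_[p]))
          = ((q:ℤ_[p]))^i * β - ((q:ℤ_[p]))^i * (n₀:ℤ_[p]) := by ring
        _ = (α - (u:ℤ_[p])) - ((n:ℤ_[p]) - (u':ℤ_[p])) := by
            rw [hqβ, hcast_n]; ring
        _ = α - (n:ℤ_[p]) := by rw [huu']; ring
        _ = ((q:ℤ_[p]))^(m+i) * y := hy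
        _ = ((q:ℤ_[p]))^i * (((q:ℤ_[p]))^m * y) := by rw [pow_add]; ring
    obtain ⟨r', _, _, hr3'⟩ := main_periodic he hq hCsl hj hper' hL' hβmem
    refine ⟨(q:ℚ)^i * r' + (u:ℚ), ?_⟩
    have hαcast : (α : ℚ_[p]) = ((q:ℚ_[p]))^i * ((β : ℤ_[p]) : ℚ_[p]) + ((u:ℕ) : ℚ_[p]) := by
      have := congrArg (fun x : ℤ_[p] => (x : ℚ_[p])) hβ_eq
      push_cast at this
      linear_combination this
    rw [hαcast, hr3']
    push_cast
    ring
  · -- part (2)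
    intro j hj hper α hα
    exact main_periodic he hq hCsl hj hper hL hα
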